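/- arXiv:math/0607175 — 2 statements merged into one kernel-verified Lean document; each statement's English description precedes it below -/
import Mathlib

section
/- Let h₀ be a marginal tracial state on B ⊗ B with range projection R. Then h₀ is extremal among marginal tracial states if and only if (R (B⊗B) R) ∩ (ℂ I + V) = ℂ h₀, where V = ker(P + Q). -/
open Matrix Kronecker
open scoped ComplexOrder

/-- The trace-preserving conditional expectation of `B ⊗ B` onto `B ⊗ I`:
`P(x ⊗ y) = τ(y) (x ⊗ I)`. -/
noncomputable def Pexp (n : ℕ) (m : Matrix (Fin n × Fin n) (Fin n × Fin n) ℂ) :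
    Matrix (Fin n × Fin n) (Fin n × Fin n) ℂ :=
  Matrix.of fun p q => if p.2 = q.2 then (∑ k, m (p.1, k) (q.1, k)) / n else 0

/-- The trace-preserving conditional expectation of `B ⊗ B` onto `I ⊗ B`:
`Q(x ⊗ y) = τ(x) (I ⊗ y)`. -/
noncomputable def Qexp (n : ℕ) (m : Matrix (Fin n × Fin n) (Fin n × Fin n) ℂ) :
    Matrix (Fin n × Fin n) (Fin n × Fin n) ℂ :=
  Matrix.of fun p q => if p.1 = q.1 then (∑ k, m (k, p.2) (k, q.2)) / n else 0

/-- A marginal tracial state, as a density matrix: positive with `P(h) = Q(h) = I`. -/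
def IsMTS (n : ℕ) (h : Matrix (Fin n × Fin n) (Fin n × Fin n) ℂ) : Prop :=
  h.PosSemidef ∧ Pexp n h = 1 ∧ Qexp n h = 1

/-- An extreme point of the convex set of marginal tracial states. -/
def IsExtremalMTS (n : ℕ) (h₀ : Matrix (Fin n × Fin n) (Fin n × Fin n) ℂ) : Prop :=
  IsMTS n h₀ ∧ ∀ (h₁ h₂ : Matrix (Fin n × Fin n) (Fin n × Fin n) ℂ) (t : ℝ),
    0 < t → t < 1 → IsMTS n h₁ → IsMTS n h₂ →
    h₀ = (t : ℂ) • h₁ + ((1 - t : ℝ) : ℂ) • h₂ → h₁ = h₀ ∧ h₂ = h₀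

variable {n : ℕ}

local notation "M" => Matrix (Fin n × Fin n) (Fin n × Fin n) ℂ

lemma Pexp_add (a b : M) : Pexp n (a + b) = Pexp n a + Pexp n b := by
  ext p q
  simp only [Pexp, Matrix.add_apply, Matrix.of_apply, Finset.sum_add_distrib, add_div]
  split <;> simp

lemma Pexp_smul (c : ℂ) (a : M) : Pexp n (c • a) = c • Pexp n a := by
  ext p q
  simp only [Pexp, Matrix.smul_apply, Matrix.of_apply, smul_eq_mul, ← Finset.mul_sum, mul_div_assoc]
  split <;> simp

lemma Qexp_add (a b : M) : Qexp n (a + b) = Qexp n a + Qexp n b := by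
  ext p q
  simp only [Qexp, Matrix.add_apply, Matrix.of_apply, Finset.sum_add_distrib, add_div]
  split <;> simp

lemma Qexp_smul (c : ℂ) (a : M) : Qexp n (c • a) = c • Qexp n a := by
  ext p q
  simp only [Qexp, Matrix.smul_apply, Matrix.of_apply, smul_eq_mul, ← Finset.mul_sum, mul_div_assoc]
  split <;> simp

lemma Pexp_sub (a b : M) : Pexp n (a - b) = Pexp n a - Pexp n b := by
  ext p q
  simp only [Pexp, Matrix.sub_apply, Matrix.of_apply, Finset.sum_sub_distrib, sub_div]
  split <;> simp

lemma Qexp_sub (a b : M) : Qexp n (a - b) = Qexp n a - Qexp n b := by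
  ext p q
  simp only [Qexp, Matrix.sub_apply, Matrix.of_apply, Finset.sum_sub_distrib, sub_div]
  split <;> simp

lemma Pexp_one (hn : 0 < n) : Pexp n (1 : M) = 1 := by
  ext p q
  have hne : (n : ℂ) ≠ 0 := Nat.cast_ne_zero.mpr hn.ne'
  simp only [Pexp, Matrix.of_apply, Matrix.one_apply, Prod.mk.injEq, Prod.ext_iff]
  by_cases h2 : p.2 = q.2
  · by_cases h1 : p.1 = q.1
    · simp [h1, h2, Finset.sum_ite_eq, hne, Finset.card_univ]
    · simp [h1, h2]
  · simp [h2, fun h : p.1 = q.1 ∧ p.2 = q.2 => h2 h.2]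

lemma Qexp_one (hn : 0 < n) : Qexp n (1 : M) = 1 := by
  ext p q
  have hne : (n : ℂ) ≠ 0 := Nat.cast_ne_zero.mpr hn.ne'
  simp only [Qexp, Matrix.of_apply, Matrix.one_apply, Prod.mk.injEq, Prod.ext_iff]
  by_cases h1 : p.1 = q.1
  · by_cases h2 : p.2 = q.2
    · simp [h1, h2, Finset.sum_ite_eq, hne, Finset.card_univ]
    · simp [h1, h2]
  · simp [h1, fun h : p.1 = q.1 ∧ p.2 = q.2 => h1 h.1]

lemma Pexp_conjTranspose (a : M) : Pexp n aᴴ = (Pexp n a)ᴴ := by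
  ext p q
  simp only [Pexp, Matrix.conjTranspose_apply, Matrix.of_apply]
  by_cases h : p.2 = q.2
  · rw [if_pos h, if_pos h.symm]
    rw [star_div₀, star_sum, star_natCast]
  · rw [if_neg h, if_neg (fun hh => h hh.symm)]
    exact star_zero _ |>.symm

lemma Qexp_conjTranspose (a : M) : Qexp n aᴴ = (Qexp n a)ᴴ := by
  ext p q
  simp only [Qexp, Matrix.conjTranspose_apply, Matrix.of_apply]
  by_cases h : p.1 = q.1
  · rw [if_pos h, if_pos h.symm]
    rw [star_div₀, star_sum, star_natCast]
  · rw [if_neg h, if_neg (fun hh => h hh.symm)]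
    exact star_zero _ |>.symm

lemma trace_Pexp (hn : 0 < n) (a : M) : (Pexp n a).trace = a.trace := by
  have hne : (n : ℂ) ≠ 0 := Nat.cast_ne_zero.mpr hn.ne'
  simp only [Matrix.trace, Matrix.diag, Pexp, Matrix.of_apply, if_pos rfl]
  rw [Fintype.sum_prod_type]
  simp only [Finset.sum_const, Finset.card_univ, Fintype.card_fin, nsmul_eq_mul]
  rw [Fintype.sum_prod_type]
  simp only [if_true, mul_div_assoc', mul_div_cancel_left₀ _ hne]

lemma trace_Qexp (hn : 0 < n) (a : M) : (Qexp n a).trace = a.trace := by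
  have hne : (n : ℂ) ≠ 0 := Nat.cast_ne_zero.mpr hn.ne'
  simp only [Matrix.trace, Matrix.diag, Qexp, Matrix.of_apply, if_pos rfl]
  rw [Fintype.sum_prod_type]
  simp only [Finset.sum_const, Finset.card_univ, Fintype.card_fin, nsmul_eq_mul]
  rw [Fintype.sum_prod_type]
  simp only [if_true]
  rw [← Finset.sum_div, mul_div_assoc', mul_div_cancel_left₀ _ hne]
  exact Finset.sum_comm

lemma PQ_ker (hn : 0 < n) (v : M) (hv : Pexp n v + Qexp n v = 0) :
    Pexp n v = 0 ∧ Qexp n v = 0 := by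
  set F : Fin n → Fin n → ℂ := fun a b => (∑ k, v (a, k) (b, k)) / n with hFdef
  set G : Fin n → Fin n → ℂ := fun a b => (∑ k, v (k, a) (k, b)) / n with hGdef
  have hE : ∀ p q : Fin n × Fin n,
      (if p.2 = q.2 then F p.1 q.1 else 0) + (if p.1 = q.1 then G p.2 q.2 else 0) = 0 := by
    intro p q
    have h0 := congrFun (congrFun hv p) q
    simpa [Pexp, Qexp, Matrix.add_apply, hFdef, hGdef] using h0
  have c0 : Fin n := ⟨0, hn⟩
  have hF : ∀ a b, a ≠ b → F a b = 0 := by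
    intro a b hab
    simpa [hab] using hE (a, c0) (b, c0)
  have hG : ∀ a b, a ≠ b → G a b = 0 := by
    intro a b hab
    simpa [hab] using hE (c0, a) (c0, b)
  have hFG : ∀ a c, F a a + G c c = 0 := fun a c => by simpa using hE (a, c) (a, c)
  have hsum : ∑ a, F a a = ∑ c, G c c := by
    simp only [hFdef, hGdef, ← Finset.sum_div]
    congr 1
    rw [Finset.sum_comm]
  have hlam : ∀ a, F a a = F c0 c0 := fun a => by
    have h1 := hFG a c0; have h2 := hFG c0 c0
    linear_combination h1 - h2
  have hmu : ∀ c, G c c = -F c0 c0 := fun c => by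
    have h1 := hFG c0 c
    linear_combination h1
  have hnz : (n : ℂ) ≠ 0 := Nat.cast_ne_zero.mpr hn.ne'
  have hzero : F c0 c0 = 0 := by
    have h1 : ∑ a, F a a = (n : ℂ) * F c0 c0 := by
      rw [Finset.sum_congr rfl fun a _ => hlam a]
      simp [Finset.card_univ, mul_comm]
    have h2 : ∑ c : Fin n, G c c = (n : ℂ) * (-F c0 c0) := by
      rw [Finset.sum_congr rfl fun c _ => hmu c]
      simp [Finset.card_univ, mul_comm]
    rw [h1, h2] at hsum
    have := mul_left_cancel₀ hnz hsum
    linear_combination this / 2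
  have hFdiag : ∀ a, F a a = 0 := fun a => (hlam a).trans hzero
  have hGdiag : ∀ c, G c c = 0 := fun c => by rw [hmu c, hzero, neg_zero]
  constructor
  · ext p q
    show (if p.2 = q.2 then F p.1 q.1 else 0) = 0
    by_cases h2 : p.2 = q.2
    · by_cases h1 : p.1 = q.1
      · rw [if_pos h2]
        have : F p.1 q.1 = F p.1 p.1 := by rw [h1]
        rw [this, hFdiag]
      · rw [if_pos h2, hF _ _ h1]
    · rw [if_neg h2]
  · ext p q
    show (if p.1 = q.1 then G p.2 q.2 else 0) = 0
    by_cases h1 : p.1 = q.1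
    · by_cases h2 : p.2 = q.2
      · rw [if_pos h1]
        have : G p.2 q.2 = G p.2 p.2 := by rw [h2]
        rw [this, hGdiag]
      · rw [if_pos h1, hG _ _ h2]
    · rw [if_neg h1]

lemma mulVec_ext {A B : M} (h : ∀ x, A *ᵥ x = B *ᵥ x) : A = B := by
  ext i j
  have := congrFun (h (Pi.single j 1)) i
  simpa [Matrix.mulVec_single] using this


lemma R_mul_h {h₀ R : M} (hRidem : R * R = R)
    (hRrange : LinearMap.range (Matrix.toLin' R) = LinearMap.range (Matrix.toLin' h₀)) :
    R * h₀ = h₀ := by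
  apply mulVec_ext; intro x
  have hmem : h₀ *ᵥ x ∈ LinearMap.range (Matrix.toLin' R) := by
    rw [hRrange]
    exact ⟨x, Matrix.toLin'_apply _ _⟩
  obtain ⟨z, hz⟩ := hmem
  rw [Matrix.toLin'_apply] at hz
  rw [← Matrix.mulVec_mulVec, ← hz, Matrix.mulVec_mulVec, hRidem, hz]

lemma h_mul_R {h₀ R : M} (hps : h₀.PosSemidef) (hRherm : Rᴴ = R) (hRidem : R * R = R)
    (hRrange : LinearMap.range (Matrix.toLin' R) = LinearMap.range (Matrix.toLin' h₀)) :
    h₀ * R = h₀ := by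
  have h1 := R_mul_h hRidem hRrange
  have h2 := congrArg Matrix.conjTranspose h1
  rwa [Matrix.conjTranspose_mul, hRherm, hps.1.eq] at h2

lemma h_sandwich {h₀ R : M} (hps : h₀.PosSemidef) (hRherm : Rᴴ = R) (hRidem : R * R = R)
    (hRrange : LinearMap.range (Matrix.toLin' R) = LinearMap.range (Matrix.toLin' h₀)) :
    h₀ = R * h₀ * R := by
  rw [R_mul_h hRidem hRrange, h_mul_R hps hRherm hRidem hRrange]

lemma dp_herm_shift (A : M) (hA : Aᴴ = A) (x w : (Fin n × Fin n) → ℂ) :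
    star x ⬝ᵥ (A *ᵥ w) = star (A *ᵥ x) ⬝ᵥ w := by
  rw [star_mulVec, hA, dotProduct_mulVec]

lemma herm_dp_star (A : M) (hA : Aᴴ = A) (x : (Fin n × Fin n) → ℂ) :
    star (star x ⬝ᵥ (A *ᵥ x)) = star x ⬝ᵥ (A *ᵥ x) := by
  have h1 := star_dotProduct_star (A *ᵥ x) (star x)
  rw [star_star] at h1
  rw [← h1, ← dp_herm_shift A hA x x]

lemma herm_dp_im (A : M) (hA : Aᴴ = A) (x : (Fin n × Fin n) → ℂ) :
    (star x ⬝ᵥ (A *ᵥ x)).im = 0 := by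
  have h1 := herm_dp_star A hA x
  rw [Complex.star_def, Complex.conj_eq_iff_im] at h1
  exact h1

lemma dp_sandwich {R : M} (A : M) (x : (Fin n × Fin n) → ℂ) (hRh : Rᴴ = R) :
    star x ⬝ᵥ ((R * A * R) *ᵥ x) = star (R *ᵥ x) ⬝ᵥ (A *ᵥ (R *ᵥ x)) := by
  rw [← Matrix.mulVec_mulVec, ← Matrix.mulVec_mulVec, dp_herm_shift R hRh]

lemma dp_R {R : M} (hRherm : Rᴴ = R) (hRidem : R * R = R) (x : (Fin n × Fin n) → ℂ) :
    star x ⬝ᵥ (R *ᵥ x) = star (R *ᵥ x) ⬝ᵥ (R *ᵥ x) := by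
  conv_lhs => rw [← hRidem]
  rw [← Matrix.mulVec_mulVec, dp_herm_shift R hRherm]

lemma ker_iff {h₀ R : M} (hps : h₀.PosSemidef) (hRherm : Rᴴ = R) (hRidem : R * R = R)
    (hRrange : LinearMap.range (Matrix.toLin' R) = LinearMap.range (Matrix.toLin' h₀))
    (x : (Fin n × Fin n) → ℂ) : R *ᵥ x = 0 ↔ h₀ *ᵥ x = 0 := by
  constructor
  · intro hx
    rw [← h_mul_R hps hRherm hRidem hRrange, ← Matrix.mulVec_mulVec, hx, Matrix.mulVec_zero]
  · intro hx
    have hmem : R *ᵥ x ∈ LinearMap.range (Matrix.toLin' h₀) := by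
      rw [← hRrange]
      exact ⟨x, Matrix.toLin'_apply _ _⟩
    obtain ⟨z, hz⟩ := hmem
    rw [Matrix.toLin'_apply] at hz
    have key : star (R *ᵥ x) ⬝ᵥ (R *ᵥ x) = 0 := by
      nth_rewrite 2 [← hz]
      rw [dp_herm_shift h₀ hps.1.eq, Matrix.mulVec_mulVec,
        h_mul_R hps hRherm hRidem hRrange, hx]
      simp
    exact dotProduct_star_self_eq_zero.mp key

lemma hf_nonneg {h₀ : M} (hps : h₀.PosSemidef) (x : (Fin n × Fin n) → ℂ) :
    0 ≤ (star x ⬝ᵥ (h₀ *ᵥ x)).re := by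
  have h2 := (Complex.le_def.mp (hps.dotProduct_mulVec_nonneg x)).1
  simpa using h2

lemma hq_eq (y : (Fin n × Fin n) → ℂ) :
    (star y ⬝ᵥ y).re = ∑ i, Complex.normSq (y i) := by
  rw [dotProduct, Complex.re_sum]
  refine Finset.sum_congr rfl fun i _ => ?_
  simp [Pi.star_apply, Complex.star_def, Complex.normSq_apply, Complex.normSq_eq_conj_mul_self]

lemma hq_nonneg (y : (Fin n × Fin n) → ℂ) : 0 ≤ (star y ⬝ᵥ y).re := by
  rw [hq_eq]
  exact Finset.sum_nonneg fun i _ => Complex.normSq_nonneg _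

lemma hq_zero {y : (Fin n × Fin n) → ℂ} (h : (star y ⬝ᵥ y).re = 0) : y = 0 := by
  rw [hq_eq] at h
  funext i
  have := (Finset.sum_eq_zero_iff_of_nonneg
    (fun i _ => Complex.normSq_nonneg (y i))).mp h i (Finset.mem_univ i)
  exact Complex.normSq_eq_zero.mp this

lemma hdp_smul (A : M) (r : ℝ) (y : (Fin n × Fin n) → ℂ) :
    (star ((r : ℂ) • y) ⬝ᵥ (A *ᵥ ((r : ℂ) • y))).re = r ^ 2 * (star y ⬝ᵥ (A *ᵥ y)).re := by
  rw [star_smul, Matrix.mulVec_smul, dotProduct_smul, smul_dotProduct]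
  simp only [Complex.star_def, Complex.conj_ofReal, smul_eq_mul, ← mul_assoc]
  rw [← Complex.ofReal_mul, Complex.re_ofReal_mul]
  ring

lemma hq_smul (r : ℝ) (y : (Fin n × Fin n) → ℂ) :
    (star ((r : ℂ) • y) ⬝ᵥ ((r : ℂ) • y)).re = r ^ 2 * (star y ⬝ᵥ y).re := by
  rw [star_smul, dotProduct_smul, smul_dotProduct]
  simp only [Complex.star_def, Complex.conj_ofReal, smul_eq_mul, ← mul_assoc]
  rw [← Complex.ofReal_mul, Complex.re_ofReal_mul]
  ring

lemma exists_delta {h₀ R : M} (hps : h₀.PosSemidef) (hRherm : Rᴴ = R) (hRidem : R * R = R)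
    (hRrange : LinearMap.range (Matrix.toLin' R) = LinearMap.range (Matrix.toLin' h₀)) :
    ∃ δ : ℝ, 0 < δ ∧ ∀ x : (Fin n × Fin n) → ℂ,
      δ * (star (R *ᵥ x) ⬝ᵥ (R *ᵥ x)).re ≤ (star x ⬝ᵥ (h₀ *ᵥ x)).re := by
  by_cases hR0 : R = 0
  · refine ⟨1, one_pos, fun x => ?_⟩
    rw [hR0]
    simpa using hf_nonneg hps x
  -- R ≠ 0 : the q-sphere of the range of R is nonempty and compact
  have hx0 : ∃ x, R *ᵥ x ≠ 0 := by
    by_contra h; push_neg at h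
    exact hR0 (mulVec_ext fun x => by rw [h x, Matrix.zero_mulVec])
  obtain ⟨x0, hx0⟩ := hx0
  have contmul : Continuous fun y : (Fin n × Fin n) → ℂ => R *ᵥ y :=
    continuous_const.matrix_mulVec continuous_id
  have contf : Continuous fun y : (Fin n × Fin n) → ℂ => (star y ⬝ᵥ (h₀ *ᵥ y)).re :=
    Complex.continuous_re.comp (continuous_star.dotProduct
      (continuous_const.matrix_mulVec continuous_id))
  have contq : Continuous fun y : (Fin n × Fin n) → ℂ => (star y ⬝ᵥ y).re :=
    Complex.continuous_re.comp (continuous_star.dotProduct continuous_id)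
  have hKclosed : IsClosed {y : (Fin n × Fin n) → ℂ | R *ᵥ y = y ∧ (star y ⬝ᵥ y).re = 1} := by
    rw [(by rfl : {y : (Fin n × Fin n) → ℂ | R *ᵥ y = y ∧ (star y ⬝ᵥ y).re = 1}
      = {y | R *ᵥ y = y} ∩ {y | (star y ⬝ᵥ y).re = 1})]
    exact (isClosed_eq contmul continuous_id).inter (isClosed_eq contq continuous_const)
  have hKsub : {y : (Fin n × Fin n) → ℂ | R *ᵥ y = y ∧ (star y ⬝ᵥ y).re = 1}
      ⊆ Metric.closedBall 0 1 := by
    intro y hy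
    rw [Metric.mem_closedBall, dist_zero_right]
    rw [pi_norm_le_iff_of_nonneg zero_le_one]
    intro i
    have h1 : Complex.normSq (y i) ≤ 1 := by
      have h2 := hy.2
      rw [hq_eq] at h2
      rw [← h2]
      exact Finset.single_le_sum (fun j _ => Complex.normSq_nonneg (y j)) (Finset.mem_univ i)
    have h3 : ‖y i‖ ^ 2 = Complex.normSq (y i) := by
      rw [← Complex.sq_norm]
    nlinarith [norm_nonneg (y i)]
  have hKcompact : IsCompact {y : (Fin n × Fin n) → ℂ | R *ᵥ y = y ∧ (star y ⬝ᵥ y).re = 1} :=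
    (isCompact_closedBall (0 : (Fin n × Fin n) → ℂ) 1).of_isClosed_subset hKclosed hKsub
  -- nonemptiness
  have hnorm : ∀ y : (Fin n × Fin n) → ℂ, R *ᵥ y = y → y ≠ 0 →
      ((((Real.sqrt ((star y ⬝ᵥ y).re))⁻¹ : ℝ) : ℂ) • y) ∈
        {y : (Fin n × Fin n) → ℂ | R *ᵥ y = y ∧ (star y ⬝ᵥ y).re = 1} := by
    intro y hRy hy0
    have hqy_pos : 0 < (star y ⬝ᵥ y).re := by
      rcases lt_or_eq_of_le (hq_nonneg y) with h | h
      · exact h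
      · exact absurd (hq_zero h.symm) hy0
    have hspos : 0 < Real.sqrt ((star y ⬝ᵥ y).re) := Real.sqrt_pos.mpr hqy_pos
    constructor
    · rw [Matrix.mulVec_smul, hRy]
    · rw [hq_smul, inv_pow, Real.sq_sqrt hqy_pos.le]
      exact inv_mul_cancel₀ hqy_pos.ne'
  have hKne : Set.Nonempty {y : (Fin n × Fin n) → ℂ | R *ᵥ y = y ∧ (star y ⬝ᵥ y).re = 1} := by
    refine ⟨_, hnorm (R *ᵥ x0) ?_ hx0⟩
    rw [Matrix.mulVec_mulVec, hRidem]
  obtain ⟨w, hwK, hwmin'⟩ := hKcompact.exists_isMinOn hKne contf.continuousOn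
  have hwmin : ∀ y ∈ {y : (Fin n × Fin n) → ℂ | R *ᵥ y = y ∧ (star y ⬝ᵥ y).re = 1},
      (star w ⬝ᵥ (h₀ *ᵥ w)).re ≤ (star y ⬝ᵥ (h₀ *ᵥ y)).re := fun y hy => hwmin' hy
  have hfw : 0 < (star w ⬝ᵥ (h₀ *ᵥ w)).re := by
    rcases lt_or_eq_of_le (hf_nonneg hps w) with h | h
    · exact h
    · exfalso
      have hz0 : star w ⬝ᵥ (h₀ *ᵥ w) = 0 :=
        Complex.ext (by simpa using h.symm) (by simpa using herm_dp_im h₀ hps.1.eq w)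
      have hzero : h₀ *ᵥ w = 0 := (hps.dotProduct_mulVec_zero_iff w).mp hz0
      have hRw : R *ᵥ w = 0 := (ker_iff hps hRherm hRidem hRrange w).mpr hzero
      have hw0 : w = 0 := by rw [← hwK.1, hRw]
      have h2 := hwK.2
      rw [hw0] at h2
      simp at h2
  refine ⟨_, hfw, fun x => ?_⟩
  by_cases hy : R *ᵥ x = 0
  · rw [hy]
    simpa using hf_nonneg hps x
  · have hfx : (star x ⬝ᵥ (h₀ *ᵥ x)).re = (star (R *ᵥ x) ⬝ᵥ (h₀ *ᵥ (R *ᵥ x))).re := by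
      conv_lhs => rw [h_sandwich hps hRherm hRidem hRrange]
      rw [dp_sandwich h₀ x hRherm]
    rw [hfx]
    have hRy : R *ᵥ (R *ᵥ x) = R *ᵥ x := by rw [Matrix.mulVec_mulVec, hRidem]
    have hqy_pos : 0 < (star (R *ᵥ x) ⬝ᵥ (R *ᵥ x)).re := by
      rcases lt_or_eq_of_le (hq_nonneg (R *ᵥ x)) with h | h
      · exact h
      · exact absurd (hq_zero h.symm) hy
    have hspos : 0 < Real.sqrt ((star (R *ᵥ x) ⬝ᵥ (R *ᵥ x)).re) := Real.sqrt_pos.mpr hqy_pos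
    have huK := hnorm (R *ᵥ x) hRy hy
    have hfu := hwmin _ huK
    rw [hdp_smul] at hfu
    have hs2 : Real.sqrt ((star (R *ᵥ x) ⬝ᵥ (R *ᵥ x)).re) ^ 2
        = (star (R *ᵥ x) ⬝ᵥ (R *ᵥ x)).re := Real.sq_sqrt hqy_pos.le
    have h6 := mul_le_mul_of_nonneg_right hfu
      (sq_nonneg (Real.sqrt ((star (R *ᵥ x) ⬝ᵥ (R *ᵥ x)).re)))
    have h7 : (Real.sqrt ((star (R *ᵥ x) ⬝ᵥ (R *ᵥ x)).re))⁻¹ ^ 2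
          * (star (R *ᵥ x) ⬝ᵥ (h₀ *ᵥ (R *ᵥ x))).re
          * Real.sqrt ((star (R *ᵥ x) ⬝ᵥ (R *ᵥ x)).re) ^ 2
        = (star (R *ᵥ x) ⬝ᵥ (h₀ *ᵥ (R *ᵥ x))).re := by
      field_simp
    rw [h7, hs2] at h6
    exact h6

lemma dp_abs_bound (y : M) (u : (Fin n × Fin n) → ℂ) :
    ‖star u ⬝ᵥ (y *ᵥ u)‖ ≤ (∑ i, ∑ j, ‖y i j‖) * (star u ⬝ᵥ u).re := by
  have hterm : ∀ i : Fin n × Fin n, ‖u i‖ ^ 2 ≤ (star u ⬝ᵥ u).re := by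
    intro i
    rw [hq_eq]
    rw [(by rw [← Complex.sq_norm] : ‖u i‖ ^ 2 = Complex.normSq (u i))]
    exact Finset.single_le_sum (fun j _ => Complex.normSq_nonneg (u j)) (Finset.mem_univ i)
  have h1 : star u ⬝ᵥ (y *ᵥ u) = ∑ i, ∑ j, star (u i) * (y i j * u j) := by
    simp [dotProduct, Matrix.mulVec, Finset.mul_sum]
  rw [h1]
  calc ‖∑ i, ∑ j, star (u i) * (y i j * u j)‖
      ≤ ∑ i, ‖∑ j, star (u i) * (y i j * u j)‖ := norm_sum_le _ _
    _ ≤ ∑ i, ∑ j, ‖star (u i) * (y i j * u j)‖ :=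
        Finset.sum_le_sum fun i _ => norm_sum_le _ _
    _ ≤ ∑ i, ∑ j, ‖y i j‖ * (star u ⬝ᵥ u).re := by
        refine Finset.sum_le_sum fun i _ => Finset.sum_le_sum fun j _ => ?_
        rw [norm_mul, norm_mul, norm_star]
        have hi := hterm i
        have hj := hterm j
        have h2 : ‖u i‖ * (‖y i j‖ * ‖u j‖) = ‖y i j‖ * (‖u i‖ * ‖u j‖) := by ring
        rw [h2]
        refine mul_le_mul_of_nonneg_left ?_ (norm_nonneg _)
        nlinarith [norm_nonneg (u i), norm_nonneg (u j)]
    _ = (∑ i, ∑ j, ‖y i j‖) * (star u ⬝ᵥ u).re := by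
        rw [Finset.sum_mul]
        exact Finset.sum_congr rfl fun i _ => (Finset.sum_mul _ _ _).symm
lemma perturb {h₀ R y : M} (hps : h₀.PosSemidef) (hRherm : Rᴴ = R) (hRidem : R * R = R)
    (hRrange : LinearMap.range (Matrix.toLin' R) = LinearMap.range (Matrix.toLin' h₀))
    (hyherm : yᴴ = y) (hyR : y = R * y * R) :
    ∃ ε : ℝ, 0 < ε ∧ (h₀ + (ε : ℂ) • y).PosSemidef ∧ (h₀ - (ε : ℂ) • y).PosSemidef := by
  obtain ⟨δ, hδ, hδle⟩ := exists_delta hps hRherm hRidem hRrange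
  have hC0 : 0 ≤ ∑ i, ∑ j, ‖y i j‖ :=
    Finset.sum_nonneg fun i _ => Finset.sum_nonneg fun j _ => norm_nonneg _
  have main : ∀ σ : ℝ, |σ| ≤ δ / ((∑ i, ∑ j, ‖y i j‖) + 1) →
      (h₀ + (σ : ℂ) • y).PosSemidef := by
    intro σ hσ
    refine posSemidef_iff_dotProduct_mulVec.mpr ⟨?_, ?_⟩
    · show (h₀ + (σ : ℂ) • y)ᴴ = _
      rw [Matrix.conjTranspose_add, Matrix.conjTranspose_smul, hyherm, hps.1.eq,
        Complex.star_def, Complex.conj_ofReal]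
    · intro x
      rw [Matrix.add_mulVec, dotProduct_add, Matrix.smul_mulVec, dotProduct_smul]
      rw [Complex.le_def]
      constructor
      · -- real part
        simp only [Complex.add_re, Complex.zero_re, smul_eq_mul, Complex.re_ofReal_mul]
        have hz2 : star x ⬝ᵥ (y *ᵥ x) = star (R *ᵥ x) ⬝ᵥ (y *ᵥ (R *ᵥ x)) := by
          conv_lhs => rw [hyR]
          rw [dp_sandwich y x hRherm]
        have habs : |(star x ⬝ᵥ (y *ᵥ x)).re|
            ≤ (∑ i, ∑ j, ‖y i j‖) * (star (R *ᵥ x) ⬝ᵥ (R *ᵥ x)).re := by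
          refine le_trans (Complex.abs_re_le_norm _) ?_
          rw [hz2]
          exact dp_abs_bound y (R *ᵥ x)
        have hq0 := hq_nonneg (R *ᵥ x)
        have hδq := hδle x
        have hσb : -(δ / ((∑ i, ∑ j, ‖y i j‖) + 1)
              * ((∑ i, ∑ j, ‖y i j‖) * (star (R *ᵥ x) ⬝ᵥ (R *ᵥ x)).re))
            ≤ σ * (star x ⬝ᵥ (y *ᵥ x)).re := by
          have h1 : |σ * (star x ⬝ᵥ (y *ᵥ x)).re| ≤ δ / ((∑ i, ∑ j, ‖y i j‖) + 1)
              * ((∑ i, ∑ j, ‖y i j‖) * (star (R *ᵥ x) ⬝ᵥ (R *ᵥ x)).re) := by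
            rw [abs_mul]
            exact mul_le_mul hσ habs (abs_nonneg _) (by positivity)
          linarith [neg_abs_le (σ * (star x ⬝ᵥ (y *ᵥ x)).re), h1]
        have hkey : δ * (star (R *ᵥ x) ⬝ᵥ (R *ᵥ x)).re
              - δ / ((∑ i, ∑ j, ‖y i j‖) + 1)
                * ((∑ i, ∑ j, ‖y i j‖) * (star (R *ᵥ x) ⬝ᵥ (R *ᵥ x)).re)
            = δ * (star (R *ᵥ x) ⬝ᵥ (R *ᵥ x)).re
                / ((∑ i, ∑ j, ‖y i j‖) + 1) := by
          field_simp
          ring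
        have hpos : 0 ≤ δ * (star (R *ᵥ x) ⬝ᵥ (R *ᵥ x)).re
            / ((∑ i, ∑ j, ‖y i j‖) + 1) := by positivity
        linarith
      · -- imaginary part
        simp only [Complex.add_im, Complex.zero_im, smul_eq_mul, Complex.im_ofReal_mul]
        rw [herm_dp_im h₀ hps.1.eq, herm_dp_im y hyherm]
        ring
  refine ⟨δ / ((∑ i, ∑ j, ‖y i j‖) + 1), by positivity, ?_, ?_⟩
  · exact main _ (by rw [abs_of_pos (by positivity)])
  · have h2 := main (-(δ / ((∑ i, ∑ j, ‖y i j‖) + 1)))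
      (by rw [abs_neg, abs_of_pos (by positivity)])
    rw [sub_eq_add_neg, ← neg_smul]
    convert h2 using 3
    push_cast
    ring


/-- extremality of a marginal tracial state `h₀` is equivalent to
`(R (B⊗B) R) ∩ (ℂI + V) = ℂ h₀`. -/
theorem stmt12 (n : ℕ) (hn : 0 < n)
    (h₀ R : Matrix (Fin n × Fin n) (Fin n × Fin n) ℂ)
    (hmts : IsMTS n h₀)
    (hRherm : Rᴴ = R) (hRidem : R * R = R)
    (hRrange : LinearMap.range (Matrix.toLin' R) = LinearMap.range (Matrix.toLin' h₀)) :
    IsExtremalMTS n h₀ ↔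
      ∀ k : Matrix (Fin n × Fin n) (Fin n × Fin n) ℂ,
        ((∃ a, k = R * a * R) ∧
         (∃ (c : ℂ) (v : Matrix (Fin n × Fin n) (Fin n × Fin n) ℂ),
            Pexp n v + Qexp n v = 0 ∧ k = c • (1 : Matrix (Fin n × Fin n) (Fin n × Fin n) ℂ) + v))
        ↔ (∃ c : ℂ, k = c • h₀) := by
  obtain ⟨hps, hP0, hQ0⟩ := hmts
  have hsand : h₀ = R * h₀ * R := h_sandwich hps hRherm hRidem hRrange
  have htr1 : (1 : Matrix (Fin n × Fin n) (Fin n × Fin n) ℂ).trace = ((n * n : ℕ) : ℂ) := by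
    simp [Matrix.trace_one]
  have htrh : h₀.trace = ((n * n : ℕ) : ℂ) := by rw [← trace_Pexp hn h₀, hP0, htr1]
  have hn2 : ((n * n : ℕ) : ℂ) ≠ 0 := by
    simp only [Nat.cast_mul, ne_eq, mul_eq_zero]
    push_neg
    exact ⟨Nat.cast_ne_zero.mpr hn.ne', Nat.cast_ne_zero.mpr hn.ne'⟩
  constructor
  · rintro ⟨-, hext⟩ k
    -- key vanishing lemma for hermitian elements of R M R ∩ ker P ∩ ker Q
    have hkey : ∀ z : Matrix (Fin n × Fin n) (Fin n × Fin n) ℂ, zᴴ = z →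
        (∃ b, z = R * b * R) → Pexp n z = 0 → Qexp n z = 0 → z = 0 := by
      rintro z hzh ⟨b, hzb⟩ hPz hQz
      have hzRR : z = R * z * R := by
        rw [hzb, show R * (R * b * R) * R = (R * R) * b * (R * R) from by noncomm_ring, hRidem]
      obtain ⟨ε, hε, hpos1, hpos2⟩ := perturb hps hRherm hRidem hRrange hzh hzRR
      have mts1 : IsMTS n (h₀ + (ε : ℂ) • z) := by
        refine ⟨hpos1, ?_, ?_⟩
        · rw [Pexp_add, Pexp_smul, hP0, hPz]; simp
        · rw [Qexp_add, Qexp_smul, hQ0, hQz]; simp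
      have mts2 : IsMTS n (h₀ - (ε : ℂ) • z) := by
        refine ⟨hpos2, ?_, ?_⟩
        · rw [Pexp_sub, Pexp_smul, hP0, hPz]; simp
        · rw [Qexp_sub, Qexp_smul, hQ0, hQz]; simp
      have heq : h₀ = ((1/2 : ℝ) : ℂ) • (h₀ + (ε : ℂ) • z)
          + ((1 - 1/2 : ℝ) : ℂ) • (h₀ - (ε : ℂ) • z) := by
        push_cast
        module
      have hcon := hext _ _ (1/2 : ℝ) (by norm_num) (by norm_num) mts1 mts2 heq
      have h1 := hcon.1
      have h2 : (ε : ℂ) • z = 0 := add_left_cancel (h1.trans (add_zero h₀).symm)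
      rcases smul_eq_zero.mp h2 with h | h
      · exact absurd h (Complex.ofReal_ne_zero.mpr hε.ne')
      · exact h
    constructor
    · rintro ⟨⟨a, hk1⟩, ⟨c, v, hv, hk2⟩⟩
      obtain ⟨hPv, hQv⟩ := PQ_ker hn v hv
      have hch : R * (c • h₀) * R = c • h₀ := by
        rw [mul_smul_comm, smul_mul_assoc, ← hsand]
      have hxR : k - c • h₀ = R * (a - c • h₀) * R := by
        rw [Matrix.mul_sub, Matrix.sub_mul, hk1, hch]
      have hPx : Pexp n (k - c • h₀) = 0 := by
        rw [Pexp_sub, hk2, Pexp_add, Pexp_smul, Pexp_one hn, hPv, Pexp_smul, hP0]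
        simp
      have hQx : Qexp n (k - c • h₀) = 0 := by
        rw [Qexp_sub, hk2, Qexp_add, Qexp_smul, Qexp_one hn, hQv, Qexp_smul, hQ0]
        simp
      set x := k - c • h₀ with hxdef
      have hxconj : xᴴ = R * (a - c • h₀)ᴴ * R := by
        rw [hxR, Matrix.conjTranspose_mul, Matrix.conjTranspose_mul, hRherm]
        noncomm_ring
      have hPxc : Pexp n xᴴ = 0 := by rw [Pexp_conjTranspose, hPx]; simp
      have hQxc : Qexp n xᴴ = 0 := by rw [Qexp_conjTranspose, hQx]; simp
      have hx1 : x + xᴴ = 0 := by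
        refine hkey _ ?_ ⟨(a - c • h₀) + (a - c • h₀)ᴴ, ?_⟩ ?_ ?_
        · rw [Matrix.conjTranspose_add, Matrix.conjTranspose_conjTranspose, add_comm]
        · rw [Matrix.mul_add, Matrix.add_mul, ← hxR, ← hxconj]
        · rw [Pexp_add, hPx, hPxc, add_zero]
        · rw [Qexp_add, hQx, hQxc, add_zero]
      have hx2 : Complex.I • (x - xᴴ) = 0 := by
        refine hkey _ ?_ ⟨Complex.I • ((a - c • h₀) - (a - c • h₀)ᴴ), ?_⟩ ?_ ?_
        · rw [Matrix.conjTranspose_smul, Matrix.conjTranspose_sub,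
            Matrix.conjTranspose_conjTranspose]
          simp only [Complex.star_def, Complex.conj_I, neg_smul, smul_sub, neg_sub]
          module
        · rw [mul_smul_comm, smul_mul_assoc, Matrix.mul_sub, Matrix.sub_mul, ← hxR, ← hxconj]
        · rw [Pexp_smul, Pexp_sub, hPx, hPxc]
          simp
        · rw [Qexp_smul, Qexp_sub, hQx, hQxc]
          simp
      have hx0 : x = 0 := by
        have h3 : x - xᴴ = 0 := by
          rcases smul_eq_zero.mp hx2 with h | h
          · exact absurd h Complex.I_ne_zero
          · exact h
        have h4 : x + x = 0 := by
          have := congrArg₂ (· + ·) hx1 h3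
          simpa [add_add_sub_cancel] using this
        rcases smul_eq_zero.mp (show (2 : ℂ) • x = 0 by rw [two_smul]; exact h4) with h | h
        · norm_num at h
        · exact h
      exact ⟨c, by rw [← sub_eq_zero]; exact hx0⟩
    · rintro ⟨c, rfl⟩
      refine ⟨⟨c • h₀, by rw [mul_smul_comm, smul_mul_assoc, ← hsand]⟩,
        c, c • h₀ - c • 1, ?_, ?_⟩
      · rw [Pexp_sub, Qexp_sub, Pexp_smul, Pexp_smul, Qexp_smul, Qexp_smul, hP0, hQ0,
          Pexp_one hn, Qexp_one hn]
        simp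
      · module
  · intro hcond
    refine ⟨⟨hps, hP0, hQ0⟩, ?_⟩
    intro h₁ h₂ t ht0 ht1 hm1 hm2 heq
    have main : ∀ g : Matrix (Fin n × Fin n) (Fin n × Fin n) ℂ, g.PosSemidef →
        Pexp n g = 1 → Qexp n g = 1 → (∀ x, h₀ *ᵥ x = 0 → g *ᵥ x = 0) → g = h₀ := by
      intro g hgps hgP hgQ hker
      have h1 : g * R = g := by
        apply mulVec_ext; intro x
        rw [← Matrix.mulVec_mulVec]
        have h2 : g *ᵥ (R *ᵥ x - x) = 0 := by
          apply hker
          apply (ker_iff hps hRherm hRidem hRrange _).mp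
          rw [Matrix.mulVec_sub, Matrix.mulVec_mulVec, hRidem, sub_self]
        rw [Matrix.mulVec_sub] at h2
        exact sub_eq_zero.mp h2
      have h2 : R * g = g := by
        have h3 := congrArg Matrix.conjTranspose h1
        rwa [Matrix.conjTranspose_mul, hRherm, hgps.1.eq] at h3
      have hgRR : g = R * g * R := by rw [h2, h1]
      have side1 : Pexp n (g - 1) + Qexp n (g - 1) = 0 := by
        rw [Pexp_sub, Qexp_sub, hgP, hgQ, Pexp_one hn, Qexp_one hn]
        simp
      have side2 : g = (1 : ℂ) • (1 : Matrix (Fin n × Fin n) (Fin n × Fin n) ℂ) + (g - 1) := by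
        module
      obtain ⟨c, hc⟩ := (hcond g).mp ⟨⟨g, hgRR⟩, 1, g - 1, side1, side2⟩
      have htrg : g.trace = ((n * n : ℕ) : ℂ) := by rw [← trace_Pexp hn g, hgP, htr1]
      have htr2 : (1 : ℂ) * ((n * n : ℕ) : ℂ) = c * ((n * n : ℕ) : ℂ) := by
        rw [one_mul]
        conv_lhs => rw [← htrg, hc, Matrix.trace_smul, htrh, smul_eq_mul]
      have hc1 : c = 1 := (mul_right_cancel₀ hn2 htr2).symm
      rw [hc, hc1, one_smul]
    have hker1 : ∀ x, h₀ *ᵥ x = 0 → h₁ *ᵥ x = 0 := by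
      intro x hx
      have e1 : (t : ℂ) * (star x ⬝ᵥ (h₁ *ᵥ x)) + ((1 - t : ℝ) : ℂ) * (star x ⬝ᵥ (h₂ *ᵥ x))
          = 0 := by
        have e0 : star x ⬝ᵥ (h₀ *ᵥ x) = 0 := by rw [hx]; simp
        rw [heq, Matrix.add_mulVec, dotProduct_add, Matrix.smul_mulVec, dotProduct_smul,
          Matrix.smul_mulVec, dotProduct_smul, smul_eq_mul, smul_eq_mul] at e0
        exact e0
      have p1 : 0 ≤ (t : ℂ) * (star x ⬝ᵥ (h₁ *ᵥ x)) :=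
        mul_nonneg (Complex.zero_le_real.mpr ht0.le) (hm1.1.dotProduct_mulVec_nonneg x)
      have p2 : 0 ≤ ((1 - t : ℝ) : ℂ) * (star x ⬝ᵥ (h₂ *ᵥ x)) :=
        mul_nonneg (Complex.zero_le_real.mpr (by linarith)) (hm2.1.dotProduct_mulVec_nonneg x)
      have hz : (t : ℂ) * (star x ⬝ᵥ (h₁ *ᵥ x)) = 0 := by
        have hle : (t : ℂ) * (star x ⬝ᵥ (h₁ *ᵥ x)) ≤ 0 := by
          calc (t : ℂ) * (star x ⬝ᵥ (h₁ *ᵥ x))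
              ≤ (t : ℂ) * (star x ⬝ᵥ (h₁ *ᵥ x)) + ((1 - t : ℝ) : ℂ) * (star x ⬝ᵥ (h₂ *ᵥ x)) :=
                le_add_of_nonneg_right p2
            _ = 0 := e1
        exact le_antisymm hle p1
      have hdp : star x ⬝ᵥ (h₁ *ᵥ x) = 0 := by
        rcases mul_eq_zero.mp hz with h | h
        · exact absurd h (Complex.ofReal_ne_zero.mpr ht0.ne')
        · exact h
      exact (hm1.1.dotProduct_mulVec_zero_iff x).mp hdp
    have h1eq : h₁ = h₀ := main h₁ hm1.1 hm1.2.1 hm1.2.2 hker1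
    refine ⟨h1eq, ?_⟩
    rw [h1eq] at heq
    have hne : ((1 - t : ℝ) : ℂ) ≠ 0 := Complex.ofReal_ne_zero.mpr (by linarith)
    apply smul_right_injective _ hne
    show ((1 - t : ℝ) : ℂ) • h₂ = ((1 - t : ℝ) : ℂ) • h₀
    calc ((1 - t : ℝ) : ℂ) • h₂ = ((t : ℂ) • h₀ + ((1 - t : ℝ) : ℂ) • h₂) - (t : ℂ) • h₀ := by
          module
      _ = h₀ - (t : ℂ) • h₀ := by rw [← heq]
      _ = ((1 - t : ℝ) : ℂ) • h₀ := by push_cast; module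
end

section
/- If h₀ is an extremal marginal tracial state on B ⊗ B with n ≥ 2, then its range projection R(h₀) is strictly less than I; that is, h₀ is not invertible. -/
open Matrix Kronecker
open scoped ComplexOrder

lemma herm_quad_star {N : Type*} [Fintype N] (M : Matrix N N ℂ) (hM : Mᴴ = M) (x : N → ℂ) :
    star (dotProduct (star x) (M *ᵥ x)) = dotProduct (star x) (M *ᵥ x) := by
  rw [← star_dotProduct, star_mulVec, hM]
  exact (dotProduct_mulVec _ _ _).symm

lemma posSemidef_one_add_smul {N : Type*} [Fintype N] [DecidableEq N]
    (m : Matrix N N ℂ) (hm : mᴴ = m) :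
    ∃ ε : ℝ, 0 < ε ∧ ∀ c : ℝ, |c| ≤ ε → ((1 : Matrix N N ℂ) + (c : ℂ) • m).PosSemidef := by
  set C : ℝ := ∑ i, ∑ j, ‖m i j‖ with hC
  have hC0 : 0 ≤ C := Finset.sum_nonneg fun i _ => Finset.sum_nonneg fun j _ => norm_nonneg _
  refine ⟨1 / (C + 1), by positivity, fun c hc => ?_⟩
  have hherm : ((1 : Matrix N N ℂ) + (c : ℂ) • m)ᴴ = 1 + (c : ℂ) • m := by
    rw [conjTranspose_add, conjTranspose_smul, hm, conjTranspose_one, Complex.star_def,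
      Complex.conj_ofReal]
  refine PosSemidef.of_dotProduct_mulVec_nonneg hherm fun x => ?_
  have him := herm_quad_star _ hherm x
  rw [Complex.star_def, Complex.conj_eq_iff_im] at him
  rw [Complex.nonneg_iff]
  refine ⟨?_, him.symm⟩
  have hexp : dotProduct (star x) ((1 + (c : ℂ) • m) *ᵥ x)
      = dotProduct (star x) x + (c : ℂ) * dotProduct (star x) (m *ᵥ x) := by
    rw [add_mulVec, smul_mulVec, one_mulVec, dotProduct_add, dotProduct_smul,
      smul_eq_mul]
  set S : ℝ := ∑ i, Complex.normSq (x i) with hS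
  have hS0 : 0 ≤ S := Finset.sum_nonneg fun i _ => Complex.normSq_nonneg _
  have hSx : (dotProduct (star x) x).re = S := by
    simp [dotProduct, S, Complex.normSq_apply, Complex.mul_re]
  have hterm : ∀ i, Complex.normSq (x i) ≤ S := fun i =>
    Finset.single_le_sum (f := fun i => Complex.normSq (x i))
      (fun j _ => Complex.normSq_nonneg _) (Finset.mem_univ i)
  have key : ∀ i j, ‖x i‖ * ‖x j‖ ≤ S := by
    intro i j
    nlinarith [hterm i, hterm j, Complex.sq_norm (x i), Complex.sq_norm (x j),
      norm_nonneg (x i), norm_nonneg (x j), sq_nonneg (‖x i‖ - ‖x j‖)]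
  have habs : ‖dotProduct (star x) (m *ᵥ x)‖ ≤ C * S := by
    rw [dotProduct]
    calc ‖∑ i, star x i * (m *ᵥ x) i‖
        ≤ ∑ i, ‖star x i * (m *ᵥ x) i‖ := norm_sum_le _ _
      _ ≤ C * S := by
          rw [hC, Finset.sum_mul]
          refine Finset.sum_le_sum fun i _ => ?_
          rw [mulVec]
          calc ‖star x i * ∑ j, m i j * x j‖
              = ‖∑ j, star x i * (m i j * x j)‖ := by rw [Finset.mul_sum]
            _ ≤ ∑ j, ‖star x i * (m i j * x j)‖ := norm_sum_le _ _
            _ ≤ ∑ j, ‖m i j‖ * S := by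
                refine Finset.sum_le_sum fun j _ => ?_
                have heq : ‖star x i * (m i j * x j)‖
                    = ‖m i j‖ * (‖x i‖ * ‖x j‖) := by
                  rw [norm_mul, norm_mul, Pi.star_apply, norm_star]
                  ring
                rw [heq]
                exact mul_le_mul_of_nonneg_left (key i j) (norm_nonneg _)
            _ = (∑ j, ‖m i j‖) * S := (Finset.sum_mul _ _ _).symm
  set A := dotProduct (star x) (m *ᵥ x) with hA
  have h1 : |A.re| ≤ C * S := (Complex.abs_re_le_norm A).trans habs
  have h2 : |c| * |A.re| ≤ (1 / (C + 1)) * (C * S) :=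
    mul_le_mul hc h1 (abs_nonneg _) (by positivity)
  have h3 : (1 / (C + 1)) * (C * S) ≤ S := by
    rw [div_mul_eq_mul_div, one_mul, div_le_iff₀ (by linarith)]
    nlinarith
  rw [hexp, Complex.add_re, hSx]
  have h4 : ((c : ℂ) * A).re = c * A.re := by
    rw [Complex.mul_re, Complex.ofReal_re, Complex.ofReal_im]; ring
  rw [h4]
  have h5 := neg_abs_le (c * A.re)
  rw [abs_mul] at h5
  linarith
noncomputable def dvec (n : ℕ) : Fin n → ℂ :=
  fun i => if (i : ℕ) = 0 then 1 else if (i : ℕ) = 1 then -1 else 0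

noncomputable def kk (n : ℕ) : Matrix (Fin n × Fin n) (Fin n × Fin n) ℂ :=
  Matrix.diagonal fun p => dvec n p.1 * dvec n p.2

lemma sum_dvec {n : ℕ} (hn : 2 ≤ n) : ∑ i, dvec n i = 0 := by
  have h0 : (0 : ℕ) < n := by omega
  have h1 : (1 : ℕ) < n := by omega
  have hne : (⟨0, h0⟩ : Fin n) ≠ ⟨1, h1⟩ := by simp [Fin.ext_iff]
  rw [← Finset.sum_subset (Finset.subset_univ ({⟨0, h0⟩, ⟨1, h1⟩} : Finset (Fin n)))
    (fun i _ hi => ?_)]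
  · rw [Finset.sum_pair hne]
    simp [dvec]
  · have hv0 : (i : ℕ) ≠ 0 := fun h => hi (by
      simp only [Finset.mem_insert, Finset.mem_singleton]; left; exact Fin.ext h)
    have hv1 : (i : ℕ) ≠ 1 := fun h => hi (by
      simp only [Finset.mem_insert, Finset.mem_singleton]; right; exact Fin.ext h)
    simp [dvec, hv0, hv1]
lemma star_dvec (n : ℕ) (i : Fin n) : star (dvec n i) = dvec n i := by
  simp [dvec, apply_ite star]

lemma kk_herm (n : ℕ) : (kk n)ᴴ = kk n := by
  ext p q
  by_cases hqp : q = p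
  · subst hqp
    simp [kk, conjTranspose_apply, diagonal_apply_eq, star_mul', star_dvec, mul_comm]
  · simp [kk, conjTranspose_apply, diagonal_apply_ne, hqp, Ne.symm hqp]

lemma kk_ne_zero {n : ℕ} (hn : 2 ≤ n) : kk n ≠ 0 := by
  have h0 : (0 : ℕ) < n := by omega
  intro h
  have := congrFun (congrFun h (⟨0, h0⟩, ⟨0, h0⟩)) (⟨0, h0⟩, ⟨0, h0⟩)
  simp [kk, diagonal_apply_eq, dvec] at this

lemma Pexp_kk {n : ℕ} (hn : 2 ≤ n) : Pexp n (kk n) = 0 := by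
  ext ⟨i, a⟩ ⟨j, b⟩
  simp only [Pexp, Matrix.of_apply, Matrix.zero_apply]
  split
  · have : ∀ c : Fin n, kk n (i, c) (j, c) = if i = j then dvec n i * dvec n c else 0 := by
      intro c
      by_cases hij : i = j
      · subst hij; simp [kk, diagonal_apply_eq]
      · simp [kk, diagonal_apply_ne, hij, Prod.ext_iff]
    rw [Finset.sum_congr rfl fun c _ => this c]
    by_cases hij : i = j
    · simp [hij, ← Finset.mul_sum, sum_dvec hn]
    · simp [hij]
  · rfl

lemma Qexp_kk {n : ℕ} (hn : 2 ≤ n) : Qexp n (kk n) = 0 := by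
  ext ⟨i, a⟩ ⟨j, b⟩
  simp only [Qexp, Matrix.of_apply, Matrix.zero_apply]
  split
  · have : ∀ c : Fin n, kk n (c, a) (c, b) = if a = b then dvec n c * dvec n a else 0 := by
      intro c
      by_cases hab : a = b
      · subst hab; simp [kk, diagonal_apply_eq]
      · simp [kk, diagonal_apply_ne, hab, Prod.ext_iff]
    rw [Finset.sum_congr rfl fun c _ => this c]
    by_cases hab : a = b
    · simp [hab, ← Finset.sum_mul, sum_dvec hn]
    · simp [hab]
  · rfl

lemma Pexp_add_s13 (n : ℕ) (h k : Matrix (Fin n × Fin n) (Fin n × Fin n) ℂ) :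
    Pexp n (h + k) = Pexp n h + Pexp n k := by
  ext p q
  by_cases hpq : p.2 = q.2 <;>
    simp [Pexp, hpq, Finset.sum_add_distrib, add_div]

lemma Pexp_smul_s13 (n : ℕ) (c : ℂ) (h : Matrix (Fin n × Fin n) (Fin n × Fin n) ℂ) :
    Pexp n (c • h) = c • Pexp n h := by
  ext p q
  by_cases hpq : p.2 = q.2 <;>
    simp only [Pexp, Matrix.of_apply, Matrix.smul_apply, smul_eq_mul, hpq, if_true, mul_zero, ← Finset.mul_sum, mul_div_assoc, if_pos, ite_true]
  all_goals simp [hpq, ← Finset.mul_sum, mul_div_assoc]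

lemma Qexp_add_s13 (n : ℕ) (h k : Matrix (Fin n × Fin n) (Fin n × Fin n) ℂ) :
    Qexp n (h + k) = Qexp n h + Qexp n k := by
  ext p q
  by_cases hpq : p.1 = q.1 <;>
    simp [Qexp, hpq, Finset.sum_add_distrib, add_div]

lemma Qexp_smul_s13 (n : ℕ) (c : ℂ) (h : Matrix (Fin n × Fin n) (Fin n × Fin n) ℂ) :
    Qexp n (c • h) = c • Qexp n h := by
  ext p q
  by_cases hpq : p.1 = q.1 <;>
    simp only [Qexp, Matrix.of_apply, Matrix.smul_apply, smul_eq_mul, hpq, if_true, mul_zero, ← Finset.mul_sum, mul_div_assoc, if_pos, ite_true]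
  all_goals simp [hpq, ← Finset.mul_sum, mul_div_assoc]
open scoped MatrixOrder in
lemma extremal_not_isUnit {n : ℕ} (hn : 2 ≤ n)
    {h₀ : Matrix (Fin n × Fin n) (Fin n × Fin n) ℂ}
    (hext : IsExtremalMTS n h₀) : ¬ IsUnit h₀ := by
  intro hu
  obtain ⟨⟨hpos, hP, hQ⟩, hextr⟩ := hext
  set s := CFC.sqrt h₀ with hs
  have hss : s * s = h₀ := CFC.sqrt_mul_sqrt_self h₀ hpos.nonneg
  have hsherm : sᴴ = s := (CFC.sqrt_nonneg h₀).posSemidef.1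
  have hdets : IsUnit s.det := by
    have hdet : IsUnit h₀.det := (Matrix.isUnit_iff_isUnit_det h₀).mp hu
    rw [← hss, Matrix.det_mul] at hdet
    exact isUnit_of_mul_isUnit_left hdet
  have hsinv : s * s⁻¹ = 1 := Matrix.mul_nonsing_inv s hdets
  have hinvs : s⁻¹ * s = 1 := Matrix.nonsing_inv_mul s hdets
  have hinvherm : (s⁻¹)ᴴ = s⁻¹ := by rw [Matrix.conjTranspose_nonsing_inv, hsherm]
  set m := s⁻¹ * kk n * s⁻¹ with hm
  have hmherm : mᴴ = m := by
    rw [hm, conjTranspose_mul, conjTranspose_mul, hinvherm, kk_herm, mul_assoc]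
  obtain ⟨ε, hε, hps⟩ := posSemidef_one_add_smul m hmherm
  have hconj : ∀ c : ℝ, h₀ + (c : ℂ) • kk n = s * (1 + (c : ℂ) • m) * sᴴ := by
    intro c
    rw [hsherm, mul_add, add_mul, mul_one, hss]
    congr 1
    rw [hm, Matrix.mul_smul, Matrix.smul_mul]
    congr 1
    have hassoc : s * (s⁻¹ * kk n * s⁻¹) * s = s * s⁻¹ * kk n * (s⁻¹ * s) := by
      simp only [mul_assoc]
    rw [hassoc, hsinv, hinvs, one_mul, mul_one]
  have hmts : ∀ c : ℝ, |c| ≤ ε → IsMTS n (h₀ + (c : ℂ) • kk n) := by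
    intro c hc
    refine ⟨?_, ?_, ?_⟩
    · rw [hconj c]
      exact (hps c hc).mul_mul_conjTranspose_same s
    · rw [Pexp_add_s13, Pexp_smul_s13, Pexp_kk hn, hP]; simp
    · rw [Qexp_add_s13, Qexp_smul_s13, Qexp_kk hn, hQ]; simp
  have h1 := hmts ε (by rw [abs_of_pos hε])
  have h2 := hmts (-ε) (by rw [abs_neg, abs_of_pos hε])
  have hcomb : h₀ = ((1/2 : ℝ) : ℂ) • (h₀ + (ε : ℂ) • kk n)
      + (((1 - (1/2 : ℝ)) : ℝ) : ℂ) • (h₀ + ((-ε : ℝ) : ℂ) • kk n) := by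
    have h12 : ((1 - (1/2 : ℝ)) : ℝ) = (1/2 : ℝ) := by norm_num
    rw [h12]
    push_cast
    module
  obtain ⟨heq, -⟩ := hextr _ _ (1/2) (by norm_num) (by norm_num) h1 h2 hcomb
  have hz : (ε : ℂ) • kk n = 0 := add_eq_left.mp heq
  rcases smul_eq_zero.mp hz with h | h
  · exact hε.ne' (by exact_mod_cast h)
  · exact kk_ne_zero hn h

/-- an extremal marginal tracial state (for `n ≥ 2`) has range projection
strictly less than `I`; that is, it is not invertible. -/
theorem stmt13 (n : ℕ) (hn : 2 ≤ n)
    (h₀ R : Matrix (Fin n × Fin n) (Fin n × Fin n) ℂ)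
    (hext : IsExtremalMTS n h₀)
    (hRherm : Rᴴ = R) (hRidem : R * R = R)
    (hRrange : LinearMap.range (Matrix.toLin' R) = LinearMap.range (Matrix.toLin' h₀)) :
    R ≠ 1 ∧ ¬ IsUnit h₀ := by
  have hnu : ¬ IsUnit h₀ := extremal_not_isUnit hn hext
  refine ⟨fun hR1 => ?_, hnu⟩
  apply hnu
  rw [← Matrix.mulVec_surjective_iff_isUnit]
  have htop : LinearMap.range (Matrix.toLin' h₀) = ⊤ := by
    rw [← hRrange, hR1, Matrix.toLin'_one, LinearMap.range_id]
  intro y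
  obtain ⟨x, hx⟩ := LinearMap.range_eq_top.mp htop y
  exact ⟨x, by rwa [Matrix.toLin'_apply] at hx⟩
end
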